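/- Let $b > 0$, $r \ge 0$, and suppose $y : [0,1] \to (0,\infty)$ is absolutely continuous (differentiable) and satisfies $y'(s) \le r\,y(s) - b\,y(s)\ln y(s)$ for all $s$, with $y(0) = y_0 > 0$. Then for all $0 \le s \le 1$, $y(s) \le \exp\left(\frac{r}{b}(1 - e^{-bs})\right) y_0^{e^{-bs}}$. -/

import Mathlib

/-- Gronwall-type lemma: if `y : [0,1] → (0,∞)` satisfies
`y' ≤ r y - b y ln y` with `y 0 = y₀ > 0`, then
`y s ≤ exp((r/b)(1 - e^{-bs})) y₀^{e^{-bs}}` for `0 ≤ s ≤ 1`. -/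
theorem stmt_1 (b r : ℝ) (hb : 0 < b) (hr : 0 ≤ r)
    (y y' : ℝ → ℝ)
    (hpos : ∀ s ∈ Set.Icc (0:ℝ) 1, 0 < y s)
    (hderiv : ∀ s ∈ Set.Icc (0:ℝ) 1, HasDerivAt y (y' s) s)
    (hineq : ∀ s ∈ Set.Icc (0:ℝ) 1, y' s ≤ r * y s - b * y s * Real.log (y s)) :
    ∀ s ∈ Set.Icc (0:ℝ) 1,
      y s ≤ Real.exp (r / b * (1 - Real.exp (-b * s))) * (y 0) ^ Real.exp (-b * s) := by
  intro s hs
  set F : ℝ → ℝ := fun t => r / b * Real.exp (b * t) - Real.exp (b * t) * Real.log (y t)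
    with hF
  have hFderiv : ∀ t ∈ Set.Icc (0:ℝ) 1, HasDerivAt F
      (r / b * (Real.exp (b * t) * b)
        - (Real.exp (b * t) * b * Real.log (y t) + Real.exp (b * t) * (y' t / y t))) t := by
    intro t ht
    have he : HasDerivAt (fun u => Real.exp (b * u)) (Real.exp (b * t) * b) t := by
      simpa using (((hasDerivAt_id t).const_mul b).exp)
    have hl : HasDerivAt (fun u => Real.log (y u)) (y' t / y t) t :=
      (hderiv t ht).log (ne_of_gt (hpos t ht))
    exact ((he.const_mul (r / b)).sub (he.mul hl))
  have hF'nonneg : ∀ t ∈ Set.Icc (0:ℝ) 1,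
      0 ≤ r / b * (Real.exp (b * t) * b)
        - (Real.exp (b * t) * b * Real.log (y t) + Real.exp (b * t) * (y' t / y t)) := by
    intro t ht
    have hyt := hpos t ht
    have h1 : y' t / y t ≤ r - b * Real.log (y t) := by
      rw [div_le_iff₀ hyt]
      have := hineq t ht
      ring_nf
      ring_nf at this
      linarith
    have h2 : r / b * (Real.exp (b * t) * b) = r * Real.exp (b * t) := by
      field_simp
    rw [h2]
    have hexp : (0:ℝ) < Real.exp (b * t) := Real.exp_pos _
    nlinarith [mul_le_mul_of_nonneg_left h1 hexp.le]
  have hmono : MonotoneOn F (Set.Icc 0 1) := by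
    apply monotoneOn_of_deriv_nonneg (convex_Icc 0 1)
    · exact fun t ht => (hFderiv t ht).continuousAt.continuousWithinAt
    · intro t ht
      rw [interior_Icc] at ht
      exact (hFderiv t (Set.mem_Icc_of_Ioo ht)).differentiableAt.differentiableWithinAt
    · intro t ht
      rw [interior_Icc] at ht
      rw [(hFderiv t (Set.mem_Icc_of_Ioo ht)).deriv]
      exact hF'nonneg t (Set.mem_Icc_of_Ioo ht)
  have h0 : (0:ℝ) ∈ Set.Icc (0:ℝ) 1 := by constructor <;> norm_num
  have key := hmono h0 hs hs.1
  simp only [hF, mul_zero, Real.exp_zero, mul_one, one_mul] at key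
  -- key : r/b - log (y 0) ≤ r/b * exp(b s) - exp(b s) * log (y s)
  have hebs : (0:ℝ) < Real.exp (b * s) := Real.exp_pos _
  have hlog : Real.log (y s) ≤ r / b * (1 - Real.exp (-b * s))
      + Real.exp (-b * s) * Real.log (y 0) := by
    rw [neg_mul, Real.exp_neg]
    have h4 : Real.exp (b*s) * (r / b * (1 - (Real.exp (b*s))⁻¹) + (Real.exp (b*s))⁻¹ * Real.log (y 0))
        = r / b * Real.exp (b*s) - r / b + Real.log (y 0) := by
      field_simp
    rw [← mul_le_mul_iff_right₀ hebs, h4]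
    linarith
  calc y s = Real.exp (Real.log (y s)) := (Real.exp_log (hpos s hs)).symm
    _ ≤ Real.exp (r / b * (1 - Real.exp (-b * s)) + Real.exp (-b * s) * Real.log (y 0)) :=
        Real.exp_le_exp.mpr hlog
    _ = Real.exp (r / b * (1 - Real.exp (-b * s))) * (y 0) ^ Real.exp (-b * s) := by
        rw [Real.exp_add, Real.rpow_def_of_pos (hpos 0 h0)]
        ring_nf
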